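/- Let p1, p2 ∈ [0,1], λ1, λ2 ≥ 0, i1 ≥ 1 and i2 ∈ ℕ. Then the family (Δ1 · P(Δ1,Δ2 | (i1,i2))) indexed by (Δ1,Δ2) ∈ ℤ² is summable and Σ_{(Δ1,Δ2)∈ℤ²} Δ1 · P(Δ1,Δ2 | (i1,i2)) = λ1 − (1 − p1); that is, when the first queue is nonempty its expected one-slot change in length equals the arrival rate λ1 minus the channel success probability 1 − p1 (this drift underlies the stability condition λ1 < 1 − p1). -/

import Mathlib

/-- Probability that `x` packets arrive in `b` time slots under a Poisson
arrival process of rate `lam` per slot. -/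
noncomputable def arr (lam : ℝ) (b : ℕ) (x : ℤ) : ℝ :=
  if 0 ≤ x then Real.exp (-(lam * b)) * (lam * b) ^ x.toNat / (Nat.factorial x.toNat) else 0

/-- Probability of zero successful transmissions in one slot when the queue holds `i` packets. -/
noncomputable def d0 (i : ℕ) (p : ℝ) : ℝ := if i = 0 then 1 else p

/-- Probability of one successful transmission in one slot when the queue holds `i` packets. -/
noncomputable def d1 (i : ℕ) (p : ℝ) : ℝ := if i = 0 then 0 else 1 - p

/-- Genie-aided inter-session transition probability `P(Δ1, Δ2 | (i1, i2))`. -/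
noncomputable def Ptrans (p1 p2 lam1 lam2 : ℝ) (i1 i2 : ℕ) (Δ : ℤ × ℤ) : ℝ :=
  d0 i1 p1 * arr lam1 1 Δ.1 *
      (d0 i2 p2 * arr lam2 1 Δ.2 + d1 i2 p2 * arr lam2 1 (Δ.2 + 1)) +
    d1 i1 p1 * arr lam1 1 (Δ.1 + 1) *
      (d0 i2 p2 * arr lam2 1 (Δ.2 - 1) + d1 i2 p2 * arr lam2 1 Δ.2)

lemma arr_coe (lam : ℝ) (n : ℕ) :
    arr lam 1 (n : ℤ) = Real.exp (-lam) * lam ^ n / (Nat.factorial n) := by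
  simp [arr]

lemma arr_neg' (lam : ℝ) {x : ℤ} (hx : x < 0) : arr lam 1 x = 0 := by
  simp [arr, not_le.mpr hx]

lemma arr_nonneg (lam : ℝ) (hl : 0 ≤ lam) (x : ℤ) : 0 ≤ arr lam 1 x := by
  unfold arr
  split
  · have : (0:ℝ) ≤ lam * (1:ℕ) := by simpa using hl
    positivity
  · exact le_rfl

lemma hasSum_arr_nat (lam : ℝ) : HasSum (fun n : ℕ => arr lam 1 (n : ℤ)) 1 := by
  simp only [arr_coe]
  apply (hasSum_mul_left_iff (Real.exp_ne_zero lam)).mp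
  simp only [mul_one]
  have : (fun i ↦ Real.exp lam * (Real.exp (-lam) * lam ^ i / (Nat.factorial i))) =
      fun i ↦ lam ^ i / (Nat.factorial i) := by
    ext n
    rw [mul_div_assoc, Real.exp_neg, ← mul_assoc, ← div_eq_mul_inv,
      div_self (Real.exp_ne_zero lam), one_mul]
  rw [this, Real.exp_eq_exp_ℝ]
  exact NormedSpace.expSeries_div_hasSum_exp lam

lemma int_of_nat_range {x : ℤ} (hx : x ∉ Set.range ((↑) : ℕ → ℤ)) : x < 0 := by
  by_contra h
  exact hx ⟨x.toNat, Int.toNat_of_nonneg (not_lt.mp h)⟩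

lemma hasSum_arr (lam : ℝ) : HasSum (fun x : ℤ => arr lam 1 x) 1 := by
  refine (Function.Injective.hasSum_iff (Nat.cast_injective : Function.Injective ((↑) : ℕ → ℤ)) ?_).mp (hasSum_arr_nat lam)
  intro x hx
  exact arr_neg' lam (int_of_nat_range hx)

lemma hasSum_mul_arr_nat (lam : ℝ) :
    HasSum (fun n : ℕ => (n : ℝ) * arr lam 1 (n : ℤ)) lam := by
  have key : HasSum (fun n : ℕ => ((n + 1 : ℕ) : ℝ) * arr lam 1 ((n + 1 : ℕ) : ℤ)) (lam * 1) := by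
    have h2 : (fun n : ℕ => ((n + 1 : ℕ) : ℝ) * arr lam 1 ((n + 1 : ℕ) : ℤ)) =
        fun n : ℕ => lam * arr lam 1 (n : ℤ) := by
      ext n
      rw [arr_coe, arr_coe]
      have hfac : ((Nat.factorial (n + 1) : ℝ)) = (n + 1) * Nat.factorial n := by
        push_cast [Nat.factorial_succ]; ring
      have hne : ((Nat.factorial n : ℝ)) ≠ 0 := by positivity
      have hne1 : ((n : ℝ) + 1) ≠ 0 := by positivity
      rw [hfac]
      push_cast
      field_simp
      ring
    rw [h2]
    exact (hasSum_arr_nat lam).mul_left lam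
  have := (hasSum_nat_add_iff (f := fun n : ℕ => (n : ℝ) * arr lam 1 (n : ℤ)) 1).mp key
  simpa using this

lemma hasSum_mul_arr (lam : ℝ) :
    HasSum (fun x : ℤ => (x : ℝ) * arr lam 1 x) lam := by
  refine (Function.Injective.hasSum_iff (Nat.cast_injective : Function.Injective ((↑) : ℕ → ℤ)) ?_).mp ?_
  · intro x hx
    rw [arr_neg' lam (int_of_nat_range hx), mul_zero]
  · exact hasSum_mul_arr_nat lam

lemma hasSum_arr_shift (lam : ℝ) : HasSum (fun x : ℤ => arr lam 1 (x + 1)) 1 := by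
  have h := ((Equiv.addRight (1 : ℤ)).hasSum_iff (f := arr lam 1) (a := 1)).mpr (hasSum_arr lam)
  have he : (fun x : ℤ => arr lam 1 (x + 1)) = arr lam 1 ∘ ⇑(Equiv.addRight (1 : ℤ)) := by
    ext x; simp
  rw [he]; exact h

lemma hasSum_arr_shift' (lam : ℝ) : HasSum (fun x : ℤ => arr lam 1 (x - 1)) 1 := by
  have h := ((Equiv.subRight (1 : ℤ)).hasSum_iff (f := arr lam 1) (a := 1)).mpr (hasSum_arr lam)
  have he : (fun x : ℤ => arr lam 1 (x - 1)) = arr lam 1 ∘ ⇑(Equiv.subRight (1 : ℤ)) := by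
    ext x; simp
  rw [he]; exact h

lemma hasSum_mul_arr_shift (lam : ℝ) :
    HasSum (fun x : ℤ => ((x : ℝ) + 1) * arr lam 1 (x + 1)) lam := by
  have h := ((Equiv.addRight (1 : ℤ)).hasSum_iff
    (f := fun x : ℤ => (x : ℝ) * arr lam 1 x) (a := lam)).mpr (hasSum_mul_arr lam)
  have he : (fun x : ℤ => ((x : ℝ) + 1) * arr lam 1 (x + 1)) =
      (fun x : ℤ => (x : ℝ) * arr lam 1 x) ∘ ⇑(Equiv.addRight (1 : ℤ)) := by
    ext x; simp only [Function.comp_apply, Equiv.coe_addRight]; push_cast; ring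
  rw [he]; exact h

lemma hasSum_mul_arr_shift2 (lam : ℝ) :
    HasSum (fun x : ℤ => (x : ℝ) * arr lam 1 (x + 1)) (lam - 1) := by
  have h := (hasSum_mul_arr_shift lam).sub (hasSum_arr_shift lam)
  convert h using 2 with x
  all_goals first | rfl | ring

/-- Drift of the first queue: when `i1 ≥ 1`, the expected one-slot change of the
first queue length equals `λ1 − (1 − p1)`. -/
theorem first_queue_drift (p1 p2 lam1 lam2 : ℝ)
    (hp1 : p1 ∈ Set.Icc (0 : ℝ) 1) (hp2 : p2 ∈ Set.Icc (0 : ℝ) 1)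
    (hl1 : 0 ≤ lam1) (hl2 : 0 ≤ lam2) (i1 i2 : ℕ) (hi1 : 1 ≤ i1) :
    HasSum (fun Δ : ℤ × ℤ => (Δ.1 : ℝ) * Ptrans p1 p2 lam1 lam2 i1 i2 Δ)
      (lam1 - (1 - p1)) := by
  obtain ⟨hp1a, hp1b⟩ := hp1
  obtain ⟨hp2a, hp2b⟩ := hp2
  have hi1' : i1 ≠ 0 := by omega
  -- component functions
  set F : ℤ → ℝ := fun x => (x : ℝ) * (p1 * arr lam1 1 x) with hF
  set F' : ℤ → ℝ := fun x => (x : ℝ) * ((1 - p1) * arr lam1 1 (x + 1)) with hF'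
  set G0 : ℤ → ℝ := fun y => d0 i2 p2 * arr lam2 1 y + d1 i2 p2 * arr lam2 1 (y + 1) with hG0
  set G1 : ℤ → ℝ := fun y => d0 i2 p2 * arr lam2 1 (y - 1) + d1 i2 p2 * arr lam2 1 y with hG1
  have hd0 : 0 ≤ d0 i2 p2 := by unfold d0; split <;> linarith
  have hd1 : 0 ≤ d1 i2 p2 := by unfold d1; split <;> linarith
  have hdsum : d0 i2 p2 + d1 i2 p2 = 1 := by unfold d0 d1; split <;> ring
  have hFsum : HasSum F (p1 * lam1) := by
    have := (hasSum_mul_arr lam1).mul_left p1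
    convert this using 2 with x
    all_goals first | rfl | ring
  have hF'sum : HasSum F' ((1 - p1) * (lam1 - 1)) := by
    have := (hasSum_mul_arr_shift2 lam1).mul_left (1 - p1)
    convert this using 2 with x
    all_goals first | rfl | ring
  have hG0sum : HasSum G0 1 := by
    have := ((hasSum_arr lam2).mul_left (d0 i2 p2)).add
      ((hasSum_arr_shift lam2).mul_left (d1 i2 p2))
    simpa [hG0, mul_one, hdsum] using this
  have hG1sum : HasSum G1 1 := by
    have := ((hasSum_arr_shift' lam2).mul_left (d0 i2 p2)).add
      ((hasSum_arr lam2).mul_left (d1 i2 p2))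
    simpa [hG1, mul_one, hdsum] using this
  have hFnn : ∀ x, 0 ≤ F x := by
    intro x
    rcases lt_or_ge x 0 with hx | hx
    · simp [hF, arr_neg' lam1 hx]
    · have : (0:ℝ) ≤ (x:ℝ) := by exact_mod_cast hx
      exact mul_nonneg this (mul_nonneg hp1a (arr_nonneg lam1 hl1 x))
  have hG0nn : ∀ y, 0 ≤ G0 y := fun y =>
    add_nonneg (mul_nonneg hd0 (arr_nonneg lam2 hl2 y)) (mul_nonneg hd1 (arr_nonneg lam2 hl2 _))
  have hG1nn : ∀ y, 0 ≤ G1 y := fun y =>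
    add_nonneg (mul_nonneg hd0 (arr_nonneg lam2 hl2 _)) (mul_nonneg hd1 (arr_nonneg lam2 hl2 y))
  -- summability of |F'|
  have hF'norm : Summable (fun x : ℤ => ‖F' x‖) := by
    have hmaj : Summable (fun x : ℤ =>
        (1 - p1) * (((x : ℝ) + 1) * arr lam1 1 (x + 1)) + (1 - p1) * arr lam1 1 (x + 1)) :=
      (((hasSum_mul_arr_shift lam1).mul_left (1 - p1)).add
        ((hasSum_arr_shift lam1).mul_left (1 - p1))).summable
    refine Summable.of_nonneg_of_le (fun x => norm_nonneg _) ?_ hmaj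
    intro x
    have ha : 0 ≤ arr lam1 1 (x + 1) := arr_nonneg lam1 hl1 _
    rcases lt_or_ge (x + 1) 0 with hx | hx
    · have : F' x = 0 := by simp [hF', arr_neg' lam1 hx]
      rw [this, norm_zero]
      have ha2 : 0 ≤ ((x : ℝ) + 1) * arr lam1 1 (x + 1) := by
        rw [arr_neg' lam1 hx, mul_zero]
      rw [arr_neg' lam1 hx]
      simp
    · have hx' : (-1 : ℝ) ≤ (x : ℝ) := by
        have : (-1 : ℤ) ≤ x := by omega
        exact_mod_cast this
      have habs : |(x : ℝ)| ≤ (x : ℝ) + 2 := abs_le.mpr ⟨by linarith, by linarith⟩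
      have : ‖F' x‖ = |(x : ℝ)| * ((1 - p1) * arr lam1 1 (x + 1)) := by
        rw [hF']
        rw [Real.norm_eq_abs, abs_mul, abs_of_nonneg (mul_nonneg (by linarith) ha)]
      rw [this]
      nlinarith [mul_nonneg (sub_nonneg.mpr hp1b) ha, mul_le_mul_of_nonneg_right habs
        (mul_nonneg (sub_nonneg.mpr hp1b) ha)]
  have hG1norm : Summable (fun y : ℤ => ‖G1 y‖) := by
    refine hG1sum.summable.congr fun y => ?_
    rw [Real.norm_eq_abs, abs_of_nonneg (hG1nn y)]
  -- products
  have hterm1 : HasSum (fun Δ : ℤ × ℤ => F Δ.1 * G0 Δ.2) (p1 * lam1 * 1) :=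
    hFsum.mul hG0sum
      (hFsum.summable.mul_of_nonneg hG0sum.summable hFnn hG0nn)
  have hterm2 : HasSum (fun Δ : ℤ × ℤ => F' Δ.1 * G1 Δ.2) ((1 - p1) * (lam1 - 1) * 1) :=
    hF'sum.mul hG1sum (summable_mul_of_summable_norm hF'norm hG1norm)
  have htot := hterm1.add hterm2
  convert htot using 1
  · funext Δ
    simp only [hF, hF', hG0, hG1, Ptrans, d0, d1, if_neg hi1']
    ring
  · ring
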